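/- Let I be a set of real numbers, let α ∈ (0,1] and C ≥ 0 be reals, and let Ψ : ℝ → ℝ satisfy Ψ(z) ≤ -log 2 for every z ∈ I and |Ψ(x) - Ψ(y)| ≤ C·|x - y|^α for all x, y ∈ I. Let t > 0 be real, j a natural number, and M a real number such that exp(t·Ψ(z))·(-Ψ(z))^j ≤ M for all z ∈ I. Then for all x, y ∈ I: |exp(t·Ψ(x))·(-Ψ(x))^j - exp(t·Ψ(y))·(-Ψ(y))^j| ≤ e·C·(4j + t)·M·|x - y|^α. -/

import Mathlib

set_option maxHeartbeats 1000000


/-- Hölder bound for `exp(tΨ)·(-Ψ)^j`: if `Ψ ≤ -log 2` on `I`, `Ψ` is `α`-Hölder with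
constant `C` on `I`, and `exp(tΨ)·(-Ψ)^j ≤ M` on `I`, then on `I` the function
`exp(tΨ)·(-Ψ)^j` is `α`-Hölder with constant `e·C(4j+t)·M`. -/
theorem stmt5 (I : Set ℝ) (α C : ℝ) (hα0 : 0 < α) (hα1 : α ≤ 1) (hC : 0 ≤ C)
    (Ψ : ℝ → ℝ) (hΨ : ∀ z ∈ I, Ψ z ≤ -Real.log 2)
    (hHold : ∀ x ∈ I, ∀ y ∈ I, |Ψ x - Ψ y| ≤ C * |x - y| ^ α)
    (t : ℝ) (ht : 0 < t) (j : ℕ) (M : ℝ)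
    (hM : ∀ z ∈ I, Real.exp (t * Ψ z) * (-Ψ z) ^ j ≤ M) :
    ∀ x ∈ I, ∀ y ∈ I,
      |Real.exp (t * Ψ x) * (-Ψ x) ^ j - Real.exp (t * Ψ y) * (-Ψ y) ^ j| ≤
        Real.exp 1 * C * (4 * (j : ℝ) + t) * M * |x - y| ^ α := by
  intro x hx y hy
  set f : ℝ → ℝ := fun u => Real.exp (-(t*u)) * u^j with hf
  have hlog : (1:ℝ)/2 < Real.log 2 := by
    have := Real.log_two_gt_d9; linarith
  set ux := -Ψ x with hux_def
  set uy := -Ψ y with huy_def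
  have hux : Real.log 2 ≤ ux := by have := hΨ x hx; simp [hux_def]; linarith
  have huy : Real.log 2 ≤ uy := by have := hΨ y hy; simp [huy_def]; linarith
  set δ := C * |x - y| ^ α with hδ_def
  have hδ0 : 0 ≤ δ := mul_nonneg hC (Real.rpow_nonneg (abs_nonneg _) α)
  have hd : |ux - uy| ≤ δ := by
    have := hHold x hx y hy
    have h2 : |ux - uy| = |Ψ x - Ψ y| := by
      rw [hux_def, huy_def, abs_sub_comm]; ring_nf
    linarith [h2 ▸ this]
  have hgx : Real.exp (t * Ψ x) * (-Ψ x) ^ j = f ux := by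
    simp only [hf, hux_def]; rw [show t * Ψ x = -(t * -Ψ x) by ring]
  have hgy : Real.exp (t * Ψ y) * (-Ψ y) ^ j = f uy := by
    simp only [hf, huy_def]; rw [show t * Ψ y = -(t * -Ψ y) by ring]
  have hfx : f ux ≤ M := hgx ▸ hM x hx
  have hfy : f uy ≤ M := hgy ▸ hM y hy
  have hfpos : ∀ u : ℝ, Real.log 2 ≤ u → 0 ≤ f u := fun u hu =>
    mul_nonneg (Real.exp_pos _).le (pow_nonneg (by linarith) j)
  have hM0 : 0 ≤ M := le_trans (hfpos ux hux) hfx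
  have he1 : (1:ℝ) ≤ Real.exp 1 := by
    have := Real.add_one_le_exp (1:ℝ); linarith
  have hj0 : (0:ℝ) ≤ (j:ℝ) := Nat.cast_nonneg j
  rw [hgx, hgy]
  by_cases hcase : 1 ≤ Real.exp 1 * (4 * (j:ℝ) + t) * δ
  · have h1 : |f ux - f uy| ≤ M := by
      rw [abs_le]
      constructor <;> nlinarith [hfpos ux hux, hfpos uy huy]
    have h2 : M * 1 ≤ M * (Real.exp 1 * (4 * (j:ℝ) + t) * δ) :=
      mul_le_mul_of_nonneg_left hcase hM0
    calc |f ux - f uy| ≤ M := h1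
      _ ≤ M * (Real.exp 1 * (4 * (j:ℝ) + t) * δ) := by linarith
      _ = Real.exp 1 * C * (4 * (j:ℝ) + t) * M * |x - y| ^ α := by
          rw [hδ_def]; ring
  · push_neg at hcase
    -- small case: MVT on s = Icc a (a+δ)
    set a := min ux uy with ha_def
    have ha : Real.log 2 ≤ a := le_min hux huy
    have ha0 : (0:ℝ) < a := by linarith
    have hP : (0:ℝ) < 4 * (j:ℝ) + t := by positivity
    have h1' : (4*(j:ℝ)+t)*δ ≤ Real.exp 1 * ((4*(j:ℝ)+t)*δ) :=
      le_mul_of_one_le_left (mul_nonneg hP.le hδ0) he1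
    have h2' : (4*(j:ℝ)+t)*δ < 1 := by
      rw [mul_assoc] at hcase; linarith
    have h3' : 4*(j:ℝ)*δ ≤ (4*(j:ℝ)+t)*δ := by nlinarith [mul_nonneg ht.le hδ0]
    have h4jδ : 4*(j:ℝ)*δ < 1 := lt_of_le_of_lt h3' h2'
    have hjδ : (j:ℝ) * δ ≤ a := by linarith [mul_nonneg hj0 hδ0]
    have h2jδ : 2 * (j:ℝ) * δ ≤ 1 := by linarith [mul_nonneg hj0 hδ0]
    set s := Set.Icc a (a + δ) with hs_def
    have hmem : ux ∈ s ∧ uy ∈ s := by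
      constructor <;> constructor
      · exact min_le_left _ _
      · cases abs_le.1 hd with
        | intro h1 h2 => rcases min_choice ux uy with h | h <;> rw [ha_def, h] <;> linarith
      · exact min_le_right _ _
      · cases abs_le.1 hd with
        | intro h1 h2 => rcases min_choice ux uy with h | h <;> rw [ha_def, h] <;> linarith
    have hfa : f a ≤ M := by
      rcases min_choice ux uy with h | h <;> rw [ha_def, h] <;> assumption
    -- bound f on s
    have hfbound : ∀ u ∈ s, Real.exp (-(t*u)) * u^j ≤ Real.exp 1 * M := by
      intro u hu
      obtain ⟨hu1, hu2⟩ := hu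
      have hu0 : (0:ℝ) ≤ u := by linarith
      have hstep : a + δ ≤ a * Real.exp (δ / a) := by
        have h1 : δ / a + 1 ≤ Real.exp (δ / a) := Real.add_one_le_exp _
        have h2 : a * (δ / a + 1) ≤ a * Real.exp (δ / a) :=
          mul_le_mul_of_nonneg_left h1 ha0.le
        have h3 : a * (δ / a + 1) = a + δ := by field_simp; ring
        linarith
      have hupow : u^j ≤ a^j * Real.exp ((j:ℝ) * (δ / a)) := by
        calc u^j ≤ (a * Real.exp (δ / a))^j :=
              pow_le_pow_left₀ hu0 (by linarith) j
          _ = a^j * Real.exp (δ / a) ^ j := mul_pow _ _ _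
          _ = a^j * Real.exp ((j:ℝ) * (δ / a)) := by rw [Real.exp_nat_mul]
      have hexp : Real.exp (-(t*u)) ≤ Real.exp (-(t*a)) :=
        Real.exp_le_exp.2 (by nlinarith)
      have hjδa : (j:ℝ) * (δ / a) ≤ 1 := by
        rw [← mul_div_assoc, div_le_one ha0]; exact hjδ
      calc Real.exp (-(t*u)) * u^j
          ≤ Real.exp (-(t*a)) * (a^j * Real.exp ((j:ℝ) * (δ / a))) := by
            apply mul_le_mul hexp hupow (pow_nonneg hu0 j) (Real.exp_pos _).le
        _ = (f a) * Real.exp ((j:ℝ) * (δ / a)) := by simp only [hf]; ring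
        _ ≤ M * Real.exp 1 := by
            apply mul_le_mul hfa (Real.exp_le_exp.2 hjδa) (Real.exp_pos _).le hM0
        _ = Real.exp 1 * M := by ring
    -- derivative
    set f' : ℝ → ℝ := fun u =>
      Real.exp (-(t*u)) * ((j:ℝ) * u^(j-1)) - t * Real.exp (-(t*u)) * u^j with hf'
    have hderiv : ∀ u ∈ s, HasDerivWithinAt f (f' u) s u := by
      intro u _
      have h1 : HasDerivAt (fun u : ℝ => -(t*u)) (-t) u := by
        exact (by simpa using ((hasDerivAt_id u).const_mul t).neg : HasDerivAt (-fun y => t * y) (-t) u)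
      have h2 := h1.exp.mul (hasDerivAt_pow j u)
      have h3 : HasDerivAt f (f' u) u := by
        exact h2.congr_deriv (by simp only [hf']; ring)
      exact h3.hasDerivWithinAt
    set K := Real.exp 1 * (4 * (j:ℝ) + t) * M with hK
    have hK0 : 0 ≤ K := by positivity
    have hbound : ∀ u ∈ s, ‖f' u‖ ≤ K := by
      intro u hu
      have hu1 : a ≤ u := hu.1
      have hu0 : (1:ℝ)/2 ≤ u := by linarith
      have hE : (0:ℝ) < Real.exp (-(t*u)) := Real.exp_pos _
      have hpowle : (j:ℝ) * u^(j-1) ≤ 2 * (j:ℝ) * u^j := by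
        cases j with
        | zero => simp
        | succ k =>
          have hek : u^(k+1-1) = u^k := by norm_num
          rw [hek, pow_succ]
          have hc : (0:ℝ) ≤ ((k:ℝ)+1) := by positivity
          have huk : (0:ℝ) ≤ u^k := pow_nonneg (by linarith) k
          have h := mul_le_mul_of_nonneg_left (show (1:ℝ) ≤ 2*u by linarith)
            (mul_nonneg hc huk)
          push_cast
          nlinarith [h]
      have hfu := hfbound u hu
      have hfu0 : (0:ℝ) ≤ Real.exp (-(t*u)) * u^j :=
        mul_nonneg hE.le (pow_nonneg (by linarith) j)
      have habs : ‖f' u‖ ≤ Real.exp (-(t*u)) * ((j:ℝ) * u^(j-1))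
          + t * (Real.exp (-(t*u)) * u^j) := by
        rw [hf', Real.norm_eq_abs]; beta_reduce
        have h1 : (0:ℝ) ≤ Real.exp (-(t*u)) * ((j:ℝ) * u^(j-1)) :=
          mul_nonneg hE.le (mul_nonneg hj0 (pow_nonneg (by linarith) _))
        have h2 : (0:ℝ) ≤ t * Real.exp (-(t*u)) * u^j := by positivity
        rw [abs_le]; constructor <;> nlinarith
      have h4 : Real.exp (-(t*u)) * ((j:ℝ) * u^(j-1))
          ≤ 2 * (j:ℝ) * (Real.exp (-(t*u)) * u^j) := by nlinarith
      have h5 : 2 * (j:ℝ) * (Real.exp (-(t*u)) * u^j) + t * (Real.exp (-(t*u)) * u^j)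
          ≤ (2 * (j:ℝ) + t) * (Real.exp 1 * M) := by nlinarith
      have h6 : (2 * (j:ℝ) + t) * (Real.exp 1 * M) ≤ K := by
        rw [hK]; nlinarith
      linarith
    have hmvt := (convex_Icc a (a + δ)).norm_image_sub_le_of_norm_hasDerivWithin_le
      hderiv hbound hmem.2 hmem.1
    rw [Real.norm_eq_abs, Real.norm_eq_abs] at hmvt
    calc |f ux - f uy| ≤ K * |ux - uy| := hmvt
      _ ≤ K * δ := mul_le_mul_of_nonneg_left hd hK0
      _ = Real.exp 1 * C * (4 * (j:ℝ) + t) * M * |x - y| ^ α := by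
          rw [hK, hδ_def]; ring
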